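/- (Stability of Open Multi-Agent Systems.) Let {V_k}_{k≥0} be a sequence of nonempty finite sets of integers, and for each k let x_k, xᵉ_k : V_k → ℝ. Let γ ∈ [0,1), B, H ≥ 0 and β > γ, and assume for every k ≥ 0: (i) sqrt( Σ_{v ∈ V_k ∩ V_{k+1}} (x_{k+1,v} − xᵉ_{k,v})² ) ≤ γ · d(x_k, xᵉ_k); (ii) d(xᵉ_{k+1}, xᵉ_k) ≤ sqrt(|V_{k+1}|) · B; (iii) sqrt( Σ_{v ∈ V_{k+1} \ V_k} (x_{k+1,v} − xᵉ_{k+1,v})² ) ≤ sqrt(|V_{k+1}|) · H; (iv) |V_{k+1}| ≥ β² · |V_k|. Set R = (B + H)/(1 − γ/β). Then the trajectory of points of interest is open stable with stability radius R: for every ε > R there exists δ > 0 such that if d(x_0, xᵉ_0)/sqrt(|V_0|) < δ, then d(x_k, xᵉ_k)/sqrt(|V_k|) < ε for every k ≥ 0. -/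
import Mathlib


open Finset

/-- The open distance between two vectors `x : V₁ → ℝ` and `y : V₂ → ℝ`
(encoded as functions `ℤ → ℝ` together with their index sets `V₁, V₂`). -/
noncomputable def openDist (V₁ V₂ : Finset ℤ) (x y : ℤ → ℝ) : ℝ :=
  Real.sqrt ((∑ v ∈ V₁ ∩ V₂, (x v - y v) ^ 2) +
    (∑ v ∈ V₁ \ V₂, (x v) ^ 2) + (∑ v ∈ V₂ \ V₁, (y v) ^ 2))

private lemma my_sqrt_add_le (a b : ℝ) (ha : 0 ≤ a) (hb : 0 ≤ b) :
    Real.sqrt (a + b) ≤ Real.sqrt a + Real.sqrt b := by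
  have h : a + b ≤ (Real.sqrt a + Real.sqrt b) ^ 2 := by
    nlinarith [Real.sq_sqrt ha, Real.sq_sqrt hb, Real.sqrt_nonneg a, Real.sqrt_nonneg b]
  calc Real.sqrt (a + b) ≤ Real.sqrt ((Real.sqrt a + Real.sqrt b) ^ 2) := Real.sqrt_le_sqrt h
    _ = Real.sqrt a + Real.sqrt b := Real.sqrt_sq (by positivity)

private lemma my_minkowski (s : Finset ℤ) (f g : ℤ → ℝ) :
    Real.sqrt (∑ v ∈ s, (f v + g v) ^ 2) ≤
      Real.sqrt (∑ v ∈ s, f v ^ 2) + Real.sqrt (∑ v ∈ s, g v ^ 2) := by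
  set A := ∑ v ∈ s, f v ^ 2 with hA
  set B := ∑ v ∈ s, g v ^ 2 with hB
  have hA0 : 0 ≤ A := Finset.sum_nonneg fun v _ => sq_nonneg _
  have hB0 : 0 ≤ B := Finset.sum_nonneg fun v _ => sq_nonneg _
  have hCS : (∑ v ∈ s, f v * g v) ^ 2 ≤ A * B := Finset.sum_mul_sq_le_sq_mul_sq s f g
  have hC : (∑ v ∈ s, f v * g v) ≤ Real.sqrt A * Real.sqrt B := by
    calc (∑ v ∈ s, f v * g v) ≤ |∑ v ∈ s, f v * g v| := le_abs_self _
      _ = Real.sqrt ((∑ v ∈ s, f v * g v) ^ 2) := (Real.sqrt_sq_eq_abs _).symm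
      _ ≤ Real.sqrt (A * B) := Real.sqrt_le_sqrt hCS
      _ = Real.sqrt A * Real.sqrt B := Real.sqrt_mul hA0 _
  have hexp : ∑ v ∈ s, (f v + g v) ^ 2 = A + 2 * (∑ v ∈ s, f v * g v) + B := by
    rw [hA, hB, Finset.mul_sum, ← Finset.sum_add_distrib, ← Finset.sum_add_distrib]
    exact Finset.sum_congr rfl fun v _ => by ring
  have h2 : ∑ v ∈ s, (f v + g v) ^ 2 ≤ (Real.sqrt A + Real.sqrt B) ^ 2 := by
    rw [hexp]
    nlinarith [Real.sq_sqrt hA0, Real.sq_sqrt hB0]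
  calc Real.sqrt (∑ v ∈ s, (f v + g v) ^ 2)
      ≤ Real.sqrt ((Real.sqrt A + Real.sqrt B) ^ 2) := Real.sqrt_le_sqrt h2
    _ = Real.sqrt A + Real.sqrt B := Real.sqrt_sq (by positivity)

/-- Stability of open multi-agent systems: under contractivity, bounded variation
of the trajectory of points of interest, bounded join process and bounded decrease
of the number of agents, the trajectory of points of interest is open stable
with stability radius `R = (B + H) / (1 - γ/β)`. -/
theorem openMAS_stability (V : ℕ → Finset ℤ)
    (hV : ∀ k, (V k).Nonempty) (x xe : ℕ → ℤ → ℝ)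
    (γ B H β : ℝ) (hγ0 : 0 ≤ γ) (hγ1 : γ < 1) (hB : 0 ≤ B) (hH : 0 ≤ H)
    (hβ : β > γ)
    (hcontr : ∀ k, Real.sqrt (∑ v ∈ V k ∩ V (k + 1), (x (k + 1) v - xe k v) ^ 2) ≤
      γ * openDist (V k) (V k) (x k) (xe k))
    (hvar : ∀ k, openDist (V (k + 1)) (V k) (xe (k + 1)) (xe k) ≤
      Real.sqrt ((V (k + 1)).card) * B)
    (hjoin : ∀ k, Real.sqrt (∑ v ∈ V (k + 1) \ V k, (x (k + 1) v - xe (k + 1) v) ^ 2) ≤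
      Real.sqrt ((V (k + 1)).card) * H)
    (hcard : ∀ k, ((V (k + 1)).card : ℝ) ≥ β ^ 2 * ((V k).card : ℝ)) :
    ∀ ε > (B + H) / (1 - γ / β), ∃ δ > 0,
      openDist (V 0) (V 0) (x 0) (xe 0) / Real.sqrt ((V 0).card) < δ →
        ∀ k, openDist (V k) (V k) (x k) (xe k) / Real.sqrt ((V k).card) < ε := by
  intro ε hε
  have hβ0 : 0 < β := lt_of_le_of_lt hγ0 hβ
  have hq1 : γ / β < 1 := (div_lt_one hβ0).mpr hβ
  have hq0 : 0 ≤ γ / β := div_nonneg hγ0 hβ0.le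
  have h1q : 0 < 1 - γ / β := by linarith
  have hR : 0 ≤ (B + H) / (1 - γ / β) := div_nonneg (by linarith) h1q.le
  have hε0 : 0 < ε := lt_of_le_of_lt hR hε
  have hBH : B + H < (1 - γ / β) * ε := by
    rw [gt_iff_lt, div_lt_iff₀ h1q] at hε; nlinarith
  -- openDist with equal sets
  have hd : ∀ k, openDist (V k) (V k) (x k) (xe k) =
      Real.sqrt (∑ v ∈ V k, (x k v - xe k v) ^ 2) := by
    intro k
    unfold openDist
    rw [Finset.inter_self, Finset.sdiff_self]; simp
  have hdnn : ∀ k, 0 ≤ openDist (V k) (V k) (x k) (xe k) := by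
    intro k; rw [hd]; exact Real.sqrt_nonneg _
  have hn : ∀ k, (0 : ℝ) < Real.sqrt ((V k).card) := by
    intro k
    exact Real.sqrt_pos.mpr (by exact_mod_cast Finset.card_pos.mpr (hV k))
  refine ⟨ε, hε0, fun h0 k => ?_⟩
  induction k with
  | zero => exact h0
  | succ k ih =>
    -- main recursive estimate
    have hstep : openDist (V (k+1)) (V (k+1)) (x (k+1)) (xe (k+1)) ≤
        γ * openDist (V k) (V k) (x k) (xe k) +
          Real.sqrt ((V (k+1)).card) * (B + H) := by
      rw [hd]
      have hsplit : ∑ v ∈ V (k+1), (x (k+1) v - xe (k+1) v) ^ 2 =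
          (∑ v ∈ V (k+1) ∩ V k, (x (k+1) v - xe (k+1) v) ^ 2) +
          (∑ v ∈ V (k+1) \ V k, (x (k+1) v - xe (k+1) v) ^ 2) :=
        (Finset.sum_inter_add_sum_sdiff _ _ _).symm
      rw [hsplit]
      have h1 : Real.sqrt ((∑ v ∈ V (k+1) ∩ V k, (x (k+1) v - xe (k+1) v) ^ 2) +
          (∑ v ∈ V (k+1) \ V k, (x (k+1) v - xe (k+1) v) ^ 2)) ≤
          Real.sqrt (∑ v ∈ V (k+1) ∩ V k, (x (k+1) v - xe (k+1) v) ^ 2) +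
          Real.sqrt (∑ v ∈ V (k+1) \ V k, (x (k+1) v - xe (k+1) v) ^ 2) :=
        my_sqrt_add_le _ _ (Finset.sum_nonneg fun v _ => sq_nonneg _)
          (Finset.sum_nonneg fun v _ => sq_nonneg _)
      -- bound the intersection part
      have h2 : Real.sqrt (∑ v ∈ V (k+1) ∩ V k, (x (k+1) v - xe (k+1) v) ^ 2) ≤
          γ * openDist (V k) (V k) (x k) (xe k) + Real.sqrt ((V (k+1)).card) * B := by
        have heq : ∀ v, x (k+1) v - xe (k+1) v =
            (x (k+1) v - xe k v) + (xe k v - xe (k+1) v) := fun v => by ring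
        calc Real.sqrt (∑ v ∈ V (k+1) ∩ V k, (x (k+1) v - xe (k+1) v) ^ 2)
            = Real.sqrt (∑ v ∈ V (k+1) ∩ V k,
                ((x (k+1) v - xe k v) + (xe k v - xe (k+1) v)) ^ 2) := by
              congr 1; exact Finset.sum_congr rfl fun v _ => by rw [heq]
          _ ≤ Real.sqrt (∑ v ∈ V (k+1) ∩ V k, (x (k+1) v - xe k v) ^ 2) +
              Real.sqrt (∑ v ∈ V (k+1) ∩ V k, (xe k v - xe (k+1) v) ^ 2) :=
              my_minkowski _ _ _
          _ ≤ γ * openDist (V k) (V k) (x k) (xe k) + Real.sqrt ((V (k+1)).card) * B := by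
              gcongr
              · rw [Finset.inter_comm]; exact hcontr k
              · refine le_trans ?_ (hvar k)
                unfold openDist
                apply Real.sqrt_le_sqrt
                have : ∑ v ∈ V (k+1) ∩ V k, (xe k v - xe (k+1) v) ^ 2 =
                    ∑ v ∈ V (k+1) ∩ V k, (xe (k+1) v - xe k v) ^ 2 :=
                  Finset.sum_congr rfl fun v _ => by ring
                rw [this]
                have hnn1 : 0 ≤ ∑ v ∈ V (k+1) \ V k, (xe (k+1) v) ^ 2 :=
                  Finset.sum_nonneg fun v _ => sq_nonneg _
                have hnn2 : 0 ≤ ∑ v ∈ V k \ V (k+1), (xe k v) ^ 2 :=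
                  Finset.sum_nonneg fun v _ => sq_nonneg _
                linarith
      have h3 := hjoin k
      calc Real.sqrt ((∑ v ∈ V (k+1) ∩ V k, (x (k+1) v - xe (k+1) v) ^ 2) +
          (∑ v ∈ V (k+1) \ V k, (x (k+1) v - xe (k+1) v) ^ 2)) ≤
          (γ * openDist (V k) (V k) (x k) (xe k) + Real.sqrt ((V (k+1)).card) * B) +
            Real.sqrt ((V (k+1)).card) * H := by linarith
        _ = γ * openDist (V k) (V k) (x k) (xe k) +
            Real.sqrt ((V (k+1)).card) * (B + H) := by ring
    -- card estimate
    have hcard' : β * Real.sqrt ((V k).card) ≤ Real.sqrt ((V (k+1)).card) := by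
      have := hcard k
      calc β * Real.sqrt ((V k).card) = Real.sqrt (β ^ 2 * (V k).card) := by
            rw [Real.sqrt_mul (sq_nonneg β), Real.sqrt_sq hβ0.le]
        _ ≤ Real.sqrt ((V (k+1)).card) := Real.sqrt_le_sqrt this
    -- divide
    have key : openDist (V (k+1)) (V (k+1)) (x (k+1)) (xe (k+1)) /
        Real.sqrt ((V (k+1)).card) ≤
        (γ / β) * (openDist (V k) (V k) (x k) (xe k) / Real.sqrt ((V k).card)) +
          (B + H) := by
      rw [div_le_iff₀ (hn (k+1))]
      have hA : 0 ≤ (γ / β) * (openDist (V k) (V k) (x k) (xe k) / Real.sqrt ((V k).card)) :=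
        mul_nonneg hq0 (div_nonneg (hdnn k) (hn k).le)
      have h5 : γ * openDist (V k) (V k) (x k) (xe k) ≤
          (γ / β) * (openDist (V k) (V k) (x k) (xe k) / Real.sqrt ((V k).card)) *
            Real.sqrt ((V (k+1)).card) := by
        have heq : (γ / β) * (openDist (V k) (V k) (x k) (xe k) / Real.sqrt ((V k).card)) *
            (β * Real.sqrt ((V k).card)) = γ * openDist (V k) (V k) (x k) (xe k) := by
          field_simp
        calc γ * openDist (V k) (V k) (x k) (xe k)
            = (γ / β) * (openDist (V k) (V k) (x k) (xe k) / Real.sqrt ((V k).card)) *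
              (β * Real.sqrt ((V k).card)) := heq.symm
          _ ≤ (γ / β) * (openDist (V k) (V k) (x k) (xe k) / Real.sqrt ((V k).card)) *
              Real.sqrt ((V (k+1)).card) := mul_le_mul_of_nonneg_left hcard' hA
      calc openDist (V (k+1)) (V (k+1)) (x (k+1)) (xe (k+1))
          ≤ γ * openDist (V k) (V k) (x k) (xe k) +
            Real.sqrt ((V (k+1)).card) * (B + H) := hstep
        _ ≤ (γ / β) * (openDist (V k) (V k) (x k) (xe k) / Real.sqrt ((V k).card)) *
            Real.sqrt ((V (k+1)).card) + Real.sqrt ((V (k+1)).card) * (B + H) := by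
            linarith
        _ = ((γ / β) * (openDist (V k) (V k) (x k) (xe k) / Real.sqrt ((V k).card)) +
            (B + H)) * Real.sqrt ((V (k+1)).card) := by ring
    have hlt : (γ / β) * (openDist (V k) (V k) (x k) (xe k) / Real.sqrt ((V k).card)) +
        (B + H) < ε := by
      have hmul : (γ / β) * (openDist (V k) (V k) (x k) (xe k) / Real.sqrt ((V k).card)) ≤
          (γ / β) * ε :=
        mul_le_mul_of_nonneg_left ih.le hq0
      calc (γ / β) * (openDist (V k) (V k) (x k) (xe k) / Real.sqrt ((V k).card)) + (B + H)
          ≤ (γ / β) * ε + (B + H) := by linarith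
        _ < (γ / β) * ε + (1 - γ / β) * ε := by linarith
        _ = ε := by ring
    exact lt_of_le_of_lt key hlt
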